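/- Let i : E' → E be a geometric morphism of topoi. Then there exists a (−1)-truncated object i^∁ ∈ E, the open complement of i, such that for every X ∈ E, the mapping space E(X, i^∁) is contractible if i^*(X) is initial and empty otherwise. Equivalently, the presheaf on E sending X to a point when i^*X is initial and to the empty space otherwise is representable. -/

import Mathlib

open CategoryTheory CategoryTheory.Limits

universe u

/-- Every geometric morphism of topoi `i : E' → E` (given by an adjunction `i^* ⊣ i_*` with
`i^*` left exact) admits an open complement: a `(-1)`-truncated object `i^∁` of `E` such that
for every `X`, the mapping space `E(X, i^∁)` is (non-empty and) contractible if `i^* X` is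
initial, and empty otherwise. -/
theorem exists_open_complement {C D : Type u} [SmallCategory C] [SmallCategory D]
    (J : GrothendieckTopology C) (K : GrothendieckTopology D)
    (iStar : Sheaf J (Type u) ⥤ Sheaf K (Type u))
    (iLower : Sheaf K (Type u) ⥤ Sheaf J (Type u))
    (adj : iStar ⊣ iLower) [PreservesFiniteLimits iStar] :
    ∃ Uc : Sheaf J (Type u),
      (∀ A : Sheaf J (Type u), Subsingleton (A ⟶ Uc)) ∧
      (∀ A : Sheaf J (Type u),
        (Nonempty (A ⟶ Uc) ↔ Nonempty (IsInitial (iStar.obj A)))) := by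
  haveI : HasInitial (Sheaf K (Type u)) := Sheaf.instHasColimitsOfShape
  refine ⟨iLower.obj (⊥_ _), ?_, ?_⟩
  · intro A
    constructor
    intro f g
    have hf := (adj.homEquiv A (⊥_ _)).symm f
    have : IsIso hf := initialIsInitial.isIso_to hf
    have hinit : IsInitial (iStar.obj A) :=
      IsInitial.ofIso initialIsInitial (asIso hf).symm
    have : (adj.homEquiv A (⊥_ _)).symm f = (adj.homEquiv A (⊥_ _)).symm g :=
      hinit.hom_ext _ _
    exact (adj.homEquiv A (⊥_ _)).symm.injective this
  · intro A
    constructor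
    · rintro ⟨f⟩
      have hf := (adj.homEquiv A (⊥_ _)).symm f
      have : IsIso hf := initialIsInitial.isIso_to hf
      exact ⟨IsInitial.ofIso initialIsInitial (asIso hf).symm⟩
    · rintro ⟨h⟩
      exact ⟨adj.homEquiv A (⊥_ _) (h.to _)⟩
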